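/- Let φ ∈ 𝒫 with expansion data j_∞, j_0, (a_n^{(j)}), (b_n^{(j)}), and assume a_0^{(j)} = 0 for all 0 ≤ j ≤ j_∞ and b_0^{(j)} = 0 for all 1 ≤ j ≤ j_0 (so φ is absolutely integrable on (0,∞)). Then ∫_0^∞ φ(y) dy = Σ_{n=1}^{∞} Σ_{j=0}^{j_∞} a_n^{(j)} (N/(2πn))^{j+1} Γ(j+1, 2πn/N) + Σ_{n=1}^{∞} Σ_{j=0}^{j_0} b_n^{(j)} (N/(2πn))^{j−1} Γ(j−1, 2πn/N) + b_0^{(0)}, where Γ(s, x) = ∫_x^∞ t^{s−1} e^{−t} dt denotes the upper incomplete gamma function. (This is equation (eq mellin phi) of the paper.) -/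

import Mathlib

/-- A sequence of complex numbers has polynomial growth. -/
def PolyGrowth (c : ℕ → ℂ) : Prop :=
  ∃ (C : ℝ) (k : ℕ), 0 < C ∧ ∀ n : ℕ, ‖c n‖ ≤ C * (1 + n) ^ k

/-- The expansion `Σ_{j=0}^{J} y^j Σ_{n=0}^∞ a_n^{(j)} e^{-2πny/N}`. -/
noncomputable def expSum (N : ℕ) (J : ℕ) (a : ℕ → ℕ → ℂ) (y : ℝ) : ℂ :=
  ∑ j ∈ Finset.range (J + 1),
    (y : ℂ) ^ j * ∑' n : ℕ, a j n * (Real.exp (-(2 * Real.pi * n * y / N)) : ℂ)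

/-- Membership in the class `𝒫` of functions on `(0,∞)` (Definition 6.3 of the paper):
`φ(y)` and `φ(1/y)` both admit absolutely convergent expansions
`Σ_{j} y^j Σ_{n≥0} c_n^{(j)} e^{-2πny/N}` with coefficients of polynomial growth. -/
def MemP (N : ℕ) (φ : ℝ → ℂ) : Prop :=
  ∃ (jI j0 : ℕ) (a b : ℕ → ℕ → ℂ),
    (∀ j, PolyGrowth (a j)) ∧ (∀ j, PolyGrowth (b j)) ∧
    (∀ y : ℝ, 0 < y →
      (∀ j, Summable fun n : ℕ => ‖a j n‖ * Real.exp (-(2 * Real.pi * n * y / N))) ∧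
      (∀ j, Summable fun n : ℕ => ‖b j n‖ * Real.exp (-(2 * Real.pi * n * y / N))) ∧
      φ y = expSum N jI a y ∧ φ (1 / y) = expSum N j0 b y)

/-- The upper incomplete gamma function `Γ(s,x) = ∫_x^∞ t^{s-1} e^{-t} dt`. -/
noncomputable def incGamma (s x : ℝ) : ℝ := ∫ t in Set.Ioi x, t ^ (s - 1) * Real.exp (-t)

open MeasureTheory Real Set Filter

lemma my_integral_ofReal {μ : Measure ℝ} {f : ℝ → ℝ} :
    ∫ x, ((f x : ℝ) : ℂ) ∂μ = ((∫ x, f x ∂μ : ℝ) : ℂ) := integral_ofReal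

lemma aux_meas (s b : ℝ) : Measurable (fun y : ℝ => y ^ s * Real.exp (-(b * y))) := by
  fun_prop

lemma aux_intOn (s : ℝ) {b : ℝ} (hb : 0 < b) :
    IntegrableOn (fun y : ℝ => y ^ s * Real.exp (-(b * y))) (Set.Ioi 1) := by
  have base : IntegrableOn (fun y : ℝ => y ^ (max s 0) * Real.exp (-(b * y))) (Set.Ioi 0) := by
    have h := integrableOn_rpow_mul_exp_neg_mul_rpow (p := 1) (s := max s 0) (b := b)
      (lt_of_lt_of_le neg_one_lt_zero (le_max_right s 0)) zero_lt_one hb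
    refine h.congr_fun (fun x hx => ?_) measurableSet_Ioi
    beta_reduce; rw [Real.rpow_one]; ring_nf
  refine Integrable.mono' (base.mono_set (Set.Ioi_subset_Ioi zero_le_one))
    ((aux_meas s b).aestronglyMeasurable) ?_
  filter_upwards [ae_restrict_mem measurableSet_Ioi] with y hy
  have hy1 : (1:ℝ) ≤ y := le_of_lt hy
  have hy0 : (0:ℝ) < y := lt_of_lt_of_le zero_lt_one hy1
  rw [Real.norm_eq_abs, abs_mul, abs_of_nonneg (Real.rpow_nonneg hy0.le s),
    abs_of_nonneg (Real.exp_nonneg _)]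
  have : y ^ s ≤ y ^ (max s 0) := Real.rpow_le_rpow_of_exponent_le hy1 (le_max_left s 0)
  exact mul_le_mul_of_nonneg_right this (Real.exp_nonneg _)

lemma incGamma_alt (s : ℝ) (b : ℝ) :
    incGamma (s + 1) b = ∫ t in Set.Ioi b, t ^ s * Real.exp (-t) := by
  simp [incGamma]

lemma aux_val (s : ℝ) {b : ℝ} (hb : 0 < b) :
    ∫ y in Set.Ioi 1, y ^ s * Real.exp (-(b * y)) = b ^ (-(s+1)) * incGamma (s+1) b := by
  have h := MeasureTheory.integral_comp_mul_left_Ioi (fun t : ℝ => t ^ s * Real.exp (-t)) 1 hb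
  simp only [mul_one] at h
  have h2 : ∫ y in Set.Ioi (1:ℝ), (b * y) ^ s * Real.exp (-(b * y))
      = b ^ s * ∫ y in Set.Ioi (1:ℝ), y ^ s * Real.exp (-(b * y)) := by
    rw [← integral_const_mul]
    refine setIntegral_congr_fun measurableSet_Ioi (fun y hy => ?_)
    have hy0 : (0:ℝ) < y := lt_trans zero_lt_one hy
    rw [Real.mul_rpow hb.le hy0.le]; ring
  rw [h2] at h
  rw [incGamma_alt s b]
  have hbs : b ^ s ≠ 0 := (Real.rpow_pos_of_pos hb s).ne'
  rw [smul_eq_mul] at h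
  have h3 : ∫ y in Set.Ioi (1:ℝ), y ^ s * Real.exp (-(b * y))
      = b⁻¹ * (b ^ s)⁻¹ * ∫ t in Set.Ioi b, t ^ s * Real.exp (-t) := by
    field_simp at h ⊢
    linarith [h]
  rw [h3, Real.rpow_neg hb.le, Real.rpow_add hb, Real.rpow_one]
  ring

lemma aux_geom (C : ℝ) (k : ℕ) {r : ℝ} (hr0 : 0 ≤ r) (hr1 : r < 1) :
    Summable (fun n : ℕ => C * ((1 + (n:ℝ)) ^ k * r ^ n)) := by
  apply Summable.mul_left
  have hexp : ∀ n : ℕ, (1 + (n:ℝ)) ^ k * r ^ n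
      = ∑ i ∈ Finset.range (k+1), (k.choose i : ℝ) * ((n:ℝ) ^ (k-i) * r ^ n) := by
    intro n
    rw [add_pow, Finset.sum_mul]
    refine Finset.sum_congr rfl (fun i _ => ?_)
    rw [one_pow]
    ring
  refine Summable.congr (summable_sum ?_) (fun n => (hexp n).symm)
  intro i _
  exact (summable_pow_mul_geometric_of_norm_lt_one (k-i)
    (by rwa [Real.norm_eq_abs, abs_of_nonneg hr0])).mul_left (k.choose i : ℝ)

lemma aux_summable_integral (N : ℕ) (hN : 1 ≤ N) (A : ℕ → ℂ) (hA : PolyGrowth A) (s : ℝ) :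
    Summable fun n : ℕ =>
      ‖A (n+1)‖ * ∫ y in Set.Ioi 1, y ^ s * Real.exp (-(2 * Real.pi * ((n:ℝ)+1) / N * y)) := by
  have hNpos : (0:ℝ) < N := by exact_mod_cast hN
  set x0 : ℝ := 2 * Real.pi / N with hx0def
  have hx0 : 0 < x0 := by positivity
  obtain ⟨C, k, hC, hbound⟩ := hA
  set K : ℝ := ∫ y in Set.Ioi 1, y ^ s * Real.exp (-(x0 * y)) with hK
  have hKnn : 0 ≤ K := setIntegral_nonneg measurableSet_Ioi (fun y hy => by
    have : (0:ℝ) < y := lt_trans zero_lt_one hy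
    positivity)
  have hr1 : Real.exp (-x0) < 1 := Real.exp_lt_one_iff.mpr (by linarith)
  have key : ∀ n : ℕ, ∫ y in Set.Ioi 1, y ^ s * Real.exp (-(2 * Real.pi * ((n:ℝ)+1) / N * y))
      ≤ Real.exp (-x0) ^ n * K := by
    intro n
    have hb : (0:ℝ) < 2 * Real.pi * ((n:ℝ)+1) / N := by positivity
    have hcn : 2 * Real.pi * ((n:ℝ)+1) / N = x0 * ((n:ℝ)+1) := by rw [hx0def]; ring
    calc ∫ y in Set.Ioi 1, y ^ s * Real.exp (-(2 * Real.pi * ((n:ℝ)+1) / N * y))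
        ≤ ∫ y in Set.Ioi 1, Real.exp (-x0) ^ n * (y ^ s * Real.exp (-(x0 * y))) := by
          refine setIntegral_mono_on (aux_intOn s hb) ((aux_intOn s hx0).const_mul _)
            measurableSet_Ioi (fun y hy => ?_)
          have hy1 : (1:ℝ) ≤ y := le_of_lt hy
          have hy0 : (0:ℝ) < y := lt_of_lt_of_le zero_lt_one hy1
          have h3 : Real.exp (-(2 * Real.pi * ((n:ℝ)+1) / N * y))
              ≤ Real.exp (-x0) ^ n * Real.exp (-(x0 * y)) := by
            rw [← Real.exp_nat_mul, ← Real.exp_add]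
            apply Real.exp_le_exp.mpr
            rw [hcn]
            nlinarith [mul_nonneg (mul_nonneg hx0.le (Nat.cast_nonneg n : (0:ℝ) ≤ (n:ℝ)))
              (sub_nonneg.mpr hy1)]
          calc y ^ s * Real.exp (-(2 * Real.pi * ((n:ℝ)+1) / N * y))
              ≤ y ^ s * (Real.exp (-x0) ^ n * Real.exp (-(x0 * y))) :=
                mul_le_mul_of_nonneg_left h3 (Real.rpow_nonneg hy0.le s)
            _ = Real.exp (-x0) ^ n * (y ^ s * Real.exp (-(x0 * y))) := by ring
      _ = Real.exp (-x0) ^ n * K := by rw [integral_const_mul]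
  have hInn : ∀ n : ℕ,
      0 ≤ ∫ y in Set.Ioi 1, y ^ s * Real.exp (-(2 * Real.pi * ((n:ℝ)+1) / N * y)) := by
    intro n
    refine setIntegral_nonneg measurableSet_Ioi (fun y hy => ?_)
    have : (0:ℝ) < y := lt_trans zero_lt_one hy
    positivity
  refine Summable.of_nonneg_of_le (fun n => mul_nonneg (norm_nonneg _) (hInn n)) (fun n => ?_)
    (aux_geom (C * K * 2 ^ k) k (Real.exp_nonneg _) hr1)
  have h4 : ((1:ℝ) + (n+1:ℕ)) ^ k ≤ 2 ^ k * (1 + (n:ℝ)) ^ k := by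
    rw [← mul_pow]
    apply pow_le_pow_left₀ (by positivity)
    push_cast; linarith
  calc ‖A (n+1)‖ * ∫ y in Set.Ioi 1, y ^ s * Real.exp (-(2 * Real.pi * ((n:ℝ)+1) / N * y))
      ≤ (C * (1 + (n+1:ℕ)) ^ k) * (Real.exp (-x0) ^ n * K) :=
        mul_le_mul (hbound (n+1)) (key n) (hInn n) (by positivity)
    _ ≤ (C * (2 ^ k * (1 + (n:ℝ)) ^ k)) * (Real.exp (-x0) ^ n * K) := by
        have : 0 ≤ Real.exp (-x0) ^ n * K := mul_nonneg (by positivity) hKnn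
        exact mul_le_mul_of_nonneg_right (mul_le_mul_of_nonneg_left h4 hC.le) this
    _ = (C * K * 2 ^ k) * ((1 + (n:ℝ)) ^ k * Real.exp (-x0) ^ n) := by ring

lemma aux_summable_coeff {A : ℕ → ℂ} (hA : PolyGrowth A) {r : ℝ} (hr0 : 0 ≤ r) (hr1 : r < 1) :
    Summable fun n : ℕ => ‖A (n+1)‖ * r ^ n := by
  obtain ⟨C, k, hC, hbound⟩ := hA
  refine Summable.of_nonneg_of_le (fun n => by positivity) (fun n => ?_)
    (aux_geom (C * 2 ^ k) k hr0 hr1)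
  have h4 : ((1:ℝ) + (n+1:ℕ)) ^ k ≤ 2 ^ k * (1 + (n:ℝ)) ^ k := by
    rw [← mul_pow]
    apply pow_le_pow_left₀ (by positivity)
    push_cast; linarith
  calc ‖A (n+1)‖ * r ^ n ≤ (C * (1 + (n+1:ℕ)) ^ k) * r ^ n :=
        mul_le_mul_of_nonneg_right (hbound (n+1)) (by positivity)
    _ ≤ (C * (2 ^ k * (1 + (n:ℝ)) ^ k)) * r ^ n :=
        mul_le_mul_of_nonneg_right (mul_le_mul_of_nonneg_left h4 hC.le) (by positivity)
    _ = C * 2 ^ k * ((1 + (n:ℝ)) ^ k * r ^ n) := by ring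

lemma aux_exp_bound (N : ℕ) (hN : 1 ≤ N) (n : ℕ) {y : ℝ} (hy : 1 ≤ y) :
    Real.exp (-(2 * Real.pi * ((n:ℝ)+1) / N * y))
      ≤ Real.exp (-(2 * Real.pi / N)) ^ n * Real.exp (-(2 * Real.pi / N * y)) := by
  have hNpos : (0:ℝ) < N := by exact_mod_cast hN
  have hx0 : (0:ℝ) < 2 * Real.pi / N := by positivity
  rw [← Real.exp_nat_mul, ← Real.exp_add]
  apply Real.exp_le_exp.mpr
  have h1 : 2 * Real.pi * ((n:ℝ)+1) / N = (2 * Real.pi / N) * ((n:ℝ)+1) := by ring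
  rw [h1]
  nlinarith [mul_nonneg (mul_nonneg hx0.le (Nat.cast_nonneg n : (0:ℝ) ≤ (n:ℝ)))
    (sub_nonneg.mpr hy)]

lemma aux_block (N : ℕ) (hN : 1 ≤ N) (A : ℕ → ℂ) (hA : PolyGrowth A) (s : ℝ) :
    IntegrableOn (fun y : ℝ => ∑' n : ℕ, A (n+1) *
        ((y ^ s * Real.exp (-(2 * Real.pi * ((n:ℝ)+1) / N * y)) : ℝ) : ℂ)) (Set.Ioi 1) ∧
      ∫ y in Set.Ioi 1, (∑' n : ℕ, A (n+1) *
          ((y ^ s * Real.exp (-(2 * Real.pi * ((n:ℝ)+1) / N * y)) : ℝ) : ℂ)) =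
        ∑' n : ℕ, A (n+1) *
          (((∫ y in Set.Ioi 1, y ^ s * Real.exp (-(2 * Real.pi * ((n:ℝ)+1) / N * y))) : ℝ) : ℂ) := by
  have hNpos : (0:ℝ) < N := by exact_mod_cast hN
  set x0 : ℝ := 2 * Real.pi / N with hx0def
  have hx0 : 0 < x0 := by positivity
  have hr1 : Real.exp (-x0) < 1 := Real.exp_lt_one_iff.mpr (by linarith)
  set c : ℕ → ℝ := fun n => 2 * Real.pi * ((n:ℝ)+1) / N with hcdef
  have hc : ∀ n, 0 < c n := fun n => by positivity
  set G : ℕ → ℝ → ℂ := fun n y => A (n+1) * ((y ^ s * Real.exp (-(c n * y)) : ℝ) : ℂ) with hGdef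
  have hGint : ∀ n, IntegrableOn (G n) (Set.Ioi 1) := fun n =>
    ((aux_intOn s (hc n)).ofReal (𝕜 := ℂ)).const_mul _
  have hnorm : ∀ n, (∫ y in Set.Ioi 1, ‖G n y‖)
      = ‖A (n+1)‖ * ∫ y in Set.Ioi 1, y ^ s * Real.exp (-(c n * y)) := by
    intro n
    rw [← integral_const_mul]
    refine setIntegral_congr_fun measurableSet_Ioi (fun y hy => ?_)
    have hy0 : (0:ℝ) < y := lt_trans zero_lt_one hy
    rw [hGdef]
    simp only [norm_mul, Complex.norm_real, Real.norm_eq_abs, Real.abs_exp, abs_mul]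
    rw [abs_of_nonneg (Real.rpow_nonneg hy0.le s)]
  have hsumint : Summable fun n => ∫ y in Set.Ioi 1, ‖G n y‖ :=
    (aux_summable_integral N hN A hA s).congr (fun n => (hnorm n).symm)
  have hcoefsum : Summable fun n : ℕ => ‖A (n+1)‖ * Real.exp (-x0) ^ n :=
    aux_summable_coeff hA (Real.exp_nonneg _) hr1
  have hptbound : ∀ y : ℝ, y ∈ Set.Ioi (1:ℝ) → ∀ n : ℕ,
      ‖G n y‖ ≤ (‖A (n+1)‖ * Real.exp (-x0) ^ n) * (y ^ s * Real.exp (-(x0 * y))) := by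
    intro y hy n
    have hy1 : (1:ℝ) ≤ y := le_of_lt hy
    have hy0 : (0:ℝ) < y := lt_of_lt_of_le zero_lt_one hy1
    rw [hGdef]
    simp only [norm_mul, Complex.norm_real, Real.norm_eq_abs, Real.abs_exp, abs_mul]
    rw [abs_of_nonneg (Real.rpow_nonneg hy0.le s)]
    have h3 := aux_exp_bound N hN n hy1
    calc ‖A (n+1)‖ * (y ^ s * Real.exp (-(c n * y)))
        ≤ ‖A (n+1)‖ * (y ^ s * (Real.exp (-x0) ^ n * Real.exp (-(x0 * y)))) := by
          refine mul_le_mul_of_nonneg_left ?_ (norm_nonneg _)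
          exact mul_le_mul_of_nonneg_left h3 (Real.rpow_nonneg hy0.le s)
      _ = (‖A (n+1)‖ * Real.exp (-x0) ^ n) * (y ^ s * Real.exp (-(x0 * y))) := by ring
  have hptsum : ∀ y : ℝ, y ∈ Set.Ioi (1:ℝ) → Summable (fun n => G n y) := by
    intro y hy
    exact Summable.of_norm_bounded (hcoefsum.mul_right (y ^ s * Real.exp (-(x0 * y))))
      (hptbound y hy)
  have hmeas : AEStronglyMeasurable (fun y => ∑' n, G n y) (volume.restrict (Set.Ioi 1)) := by
    refine aestronglyMeasurable_of_tendsto_ae atTop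
      (f := fun m : ℕ => fun y => ∑ n ∈ Finset.range m, G n y)
      (fun m => Finset.aestronglyMeasurable_fun_sum _ (fun n _ => (hGint n).1)) ?_
    filter_upwards [ae_restrict_mem measurableSet_Ioi] with y hy
    exact (hptsum y hy).hasSum.tendsto_sum_nat
  constructor
  · set M : ℝ := ∑' n, ‖A (n+1)‖ * Real.exp (-x0) ^ n with hM
    refine Integrable.mono' ((aux_intOn s hx0).const_mul M) hmeas ?_
    filter_upwards [ae_restrict_mem measurableSet_Ioi] with y hy
    have hns : Summable fun n => ‖G n y‖ :=
      Summable.of_nonneg_of_le (fun n => norm_nonneg _) (hptbound y hy)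
        (hcoefsum.mul_right _)
    calc ‖∑' n, G n y‖ ≤ ∑' n, ‖G n y‖ := norm_tsum_le_tsum_norm hns
      _ ≤ ∑' n, (‖A (n+1)‖ * Real.exp (-x0) ^ n) * (y ^ s * Real.exp (-(x0 * y))) :=
          Summable.tsum_le_tsum (hptbound y hy) hns (hcoefsum.mul_right _)
      _ = M * (y ^ s * Real.exp (-(x0 * y))) := tsum_mul_right
  · rw [← integral_tsum_of_summable_integral_norm hGint hsumint]
    refine tsum_congr (fun n => ?_)
    simp only [hGdef]
    rw [MeasureTheory.integral_const_mul]
    congr 1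
    simp only [hcdef]
    push_cast
    rw [← my_integral_ofReal]
    refine setIntegral_congr_fun measurableSet_Ioi (fun y hy => ?_)
    push_cast
    ring

lemma aux_summable_pt (N : ℕ) (hN : 1 ≤ N) {A : ℕ → ℂ} (hA : PolyGrowth A) {y : ℝ} (hy : 0 < y) :
    Summable fun n : ℕ => A n * (Real.exp (-(2 * Real.pi * (n:ℝ) * y / N)) : ℂ) := by
  have hNpos : (0:ℝ) < N := by exact_mod_cast hN
  obtain ⟨C, k, hC, hbound⟩ := hA
  apply Summable.of_norm
  have hr0 : (0:ℝ) ≤ Real.exp (-(2 * Real.pi * y / N)) := Real.exp_nonneg _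
  have hr1 : Real.exp (-(2 * Real.pi * y / N)) < 1 := Real.exp_lt_one_iff.mpr (by
    have : (0:ℝ) < 2 * Real.pi * y / N := by positivity
    linarith)
  refine Summable.of_nonneg_of_le (fun n => norm_nonneg _) (fun n => ?_)
    (aux_geom C k hr0 hr1)
  rw [norm_mul, Complex.norm_real, Real.norm_eq_abs, Real.abs_exp]
  have hexp : Real.exp (-(2 * Real.pi * (n:ℝ) * y / N))
      = Real.exp (-(2 * Real.pi * y / N)) ^ n := by
    rw [← Real.exp_nat_mul]
    congr 1
    ring
  rw [hexp]
  calc ‖A n‖ * Real.exp (-(2 * Real.pi * y / N)) ^ n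
      ≤ (C * (1 + (n:ℝ)) ^ k) * Real.exp (-(2 * Real.pi * y / N)) ^ n :=
        mul_le_mul_of_nonneg_right (hbound n) (pow_nonneg hr0 n)
    _ = C * ((1 + (n:ℝ)) ^ k * Real.exp (-(2 * Real.pi * y / N)) ^ n) := by ring

lemma aux_summable_cval (N : ℕ) (hN : 1 ≤ N) (A : ℕ → ℂ) (hA : PolyGrowth A) (s : ℝ) :
    Summable fun n : ℕ => A (n+1) *
      (((∫ y in Set.Ioi 1, y ^ s * Real.exp (-(2 * Real.pi * ((n:ℝ)+1) / N * y))) : ℝ) : ℂ) := by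
  apply Summable.of_norm
  refine (aux_summable_integral N hN A hA s).congr (fun n => ?_)
  rw [norm_mul, Complex.norm_real, Real.norm_eq_abs]
  congr 1
  refine (abs_of_nonneg (setIntegral_nonneg measurableSet_Ioi (fun y hy => ?_))).symm
  have : (0:ℝ) < y := lt_trans zero_lt_one hy
  positivity

/-- Equation (eq mellin phi): the integral over `(0,∞)` of an absolutely integrable
function of the class `𝒫` as a rapidly convergent series of incomplete gamma values. -/
theorem memP_integral_eq (N : ℕ) (hN : 1 ≤ N) (φ : ℝ → ℂ) (jI j0 : ℕ)
    (a b : ℕ → ℕ → ℂ) (ha : ∀ j, PolyGrowth (a j)) (hb : ∀ j, PolyGrowth (b j))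
    (hφ : ∀ y : ℝ, 0 < y → φ y = expSum N jI a y)
    (hφ' : ∀ y : ℝ, 0 < y → φ (1 / y) = expSum N j0 b y)
    (ha0 : ∀ j ≤ jI, a j 0 = 0) (hb0 : ∀ j, 1 ≤ j → j ≤ j0 → b j 0 = 0) :
    ∫ y in Set.Ioi (0 : ℝ), φ y =
      (∑' n : ℕ, ∑ j ∈ Finset.range (jI + 1),
          a j (n + 1) * ((N : ℂ) / (2 * (Real.pi : ℂ) * ((n : ℂ) + 1))) ^ (j + 1)
            * (incGamma ((j : ℝ) + 1) (2 * Real.pi * ((n : ℝ) + 1) / N) : ℂ))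
        + (∑' n : ℕ, ∑ j ∈ Finset.range (j0 + 1),
            b j (n + 1) * ((N : ℂ) / (2 * (Real.pi : ℂ) * ((n : ℂ) + 1))) ^ ((j : ℤ) - 1)
              * (incGamma ((j : ℝ) - 1) (2 * Real.pi * ((n : ℝ) + 1) / N) : ℂ))
        + b 0 0 := by
  have hNpos : (0:ℝ) < N := by exact_mod_cast hN
  -- the `a`-side expansion on `Ioi 1`
  have hblockA : ∀ j : ℕ, _ := fun j => aux_block N hN (a j) (ha j) (j:ℝ)
  have ha_cong : ∀ y ∈ Set.Ioi (1:ℝ), φ y = ∑ j ∈ Finset.range (jI+1), ∑' n : ℕ, a j (n+1) *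
      ((y ^ ((j:ℕ):ℝ) * Real.exp (-(2 * Real.pi * ((n:ℝ)+1) / N * y)) : ℝ) : ℂ) := by
    intro y hy
    have hy0 : (0:ℝ) < y := lt_trans zero_lt_one hy
    rw [hφ y hy0]
    unfold expSum
    refine Finset.sum_congr rfl (fun j hj => ?_)
    have hj' : j ≤ jI := Nat.lt_succ_iff.mp (Finset.mem_range.mp hj)
    rw [Summable.tsum_eq_zero_add (aux_summable_pt N hN (ha j) hy0), ha0 j hj', zero_mul, zero_add,
      ← tsum_mul_left]
    refine tsum_congr fun n => ?_
    rw [Real.rpow_natCast]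
    push_cast
    ring_nf
  have haeA : (fun y : ℝ => ∑ j ∈ Finset.range (jI+1), ∑' n : ℕ, a j (n+1) *
      ((y ^ ((j:ℕ):ℝ) * Real.exp (-(2 * Real.pi * ((n:ℝ)+1) / N * y)) : ℝ) : ℂ))
      =ᵐ[volume.restrict (Set.Ioi 1)] φ := by
    filter_upwards [ae_restrict_mem measurableSet_Ioi] with y hy
    exact (ha_cong y hy).symm
  have hφInt1 : IntegrableOn φ (Set.Ioi 1) :=
    (integrable_finset_sum _ (fun j _ => (hblockA j).1)).congr haeA
  have hInt1val : ∫ y in Set.Ioi 1, φ y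
      = ∑ j ∈ Finset.range (jI+1), ∑' n : ℕ, a j (n+1) *
        (((∫ y in Set.Ioi 1, y ^ ((j:ℕ):ℝ) *
          Real.exp (-(2 * Real.pi * ((n:ℝ)+1) / N * y))) : ℝ) : ℂ) := by
    rw [← integral_congr_ae haeA, integral_finset_sum _ (fun j _ => (hblockA j).1)]
    exact Finset.sum_congr rfl fun j _ => (hblockA j).2
  -- the `b`-side: modified coefficients
  set b' : ℕ → ℕ → ℂ := fun j n => if j = 0 ∧ n = 0 then 0 else b j n with hb'def
  have hb'poly : ∀ j, PolyGrowth (b' j) := by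
    intro j
    obtain ⟨C, k, hC, hbnd⟩ := hb j
    refine ⟨C, k, hC, fun n => ?_⟩
    by_cases h : j = 0 ∧ n = 0
    · rw [hb'def]
      simp only [if_pos h, norm_zero]
      positivity
    · rw [hb'def]
      simp only [if_neg h]
      exact hbnd n
  have hb'succ : ∀ j n : ℕ, b' j (n+1) = b j (n+1) := by
    intro j n
    rw [hb'def]
    simp
  have hblockB : ∀ j : ℕ, _ := fun j => aux_block N hN (b' j) (hb'poly j) ((j:ℝ) - 2)
  -- change of variables x ↦ x⁻¹ on (1, ∞)
  have hderiv : ∀ x ∈ Set.Ioi (1:ℝ),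
      HasDerivWithinAt (fun t : ℝ => t⁻¹) (-(x^2)⁻¹) (Set.Ioi 1) x := by
    intro x hx
    have hx0 : x ≠ 0 := (lt_trans zero_lt_one hx).ne'
    exact (hasDerivAt_inv hx0).hasDerivWithinAt
  have hinj : Set.InjOn (fun t : ℝ => t⁻¹) (Set.Ioi 1) := fun u _ v _ h => inv_injective h
  have himg : (fun t : ℝ => t⁻¹) '' (Set.Ioi 1) = Set.Ioo 0 1 := by
    ext t
    simp only [Set.mem_image, Set.mem_Ioi, Set.mem_Ioo]
    constructor
    · rintro ⟨u, hu, rfl⟩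
      have hu0 : (0:ℝ) < u := lt_trans zero_lt_one hu
      exact ⟨inv_pos.mpr hu0, inv_lt_one_of_one_lt₀ hu⟩
    · rintro ⟨h0, h1⟩
      exact ⟨t⁻¹, (one_lt_inv₀ h0).mpr h1, inv_inv t⟩
  have hchg : ∫ x in Set.Ioo (0:ℝ) 1, φ x
      = ∫ x in Set.Ioi (1:ℝ), |(-(x^2)⁻¹)| • φ x⁻¹ := by
    rw [← himg]
    exact integral_image_eq_integral_abs_deriv_smul measurableSet_Ioi hderiv hinj φ
  have hintiff : IntegrableOn φ (Set.Ioo (0:ℝ) 1)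
      ↔ IntegrableOn (fun x : ℝ => |(-(x^2)⁻¹)| • φ x⁻¹) (Set.Ioi 1) := by
    rw [← himg]
    exact integrableOn_image_iff_integrableOn_abs_deriv_smul measurableSet_Ioi hderiv hinj φ
  -- pointwise identity on (1,∞) for the substituted function
  have hb_cong : ∀ x ∈ Set.Ioi (1:ℝ), |(-(x^2)⁻¹)| • φ x⁻¹
      = b 0 0 * ((x ^ ((0:ℝ)-2) : ℝ) : ℂ)
        + ∑ j ∈ Finset.range (j0+1), ∑' n : ℕ, b' j (n+1) *
          ((x ^ (((j:ℕ):ℝ) - 2) * Real.exp (-(2 * Real.pi * ((n:ℝ)+1) / N * x)) : ℝ) : ℂ) := by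
    intro x hx
    have hx1 : (1:ℝ) < x := hx
    have hx0 : (0:ℝ) < x := lt_trans zero_lt_one hx1
    have hxinv : φ x⁻¹ = expSum N j0 b x := by
      rw [← one_div]
      exact hφ' x hx0
    have habs : |(-(x^2)⁻¹)| = x ^ ((-2):ℝ) := by
      rw [abs_neg, abs_inv, abs_of_nonneg (by positivity : (0:ℝ) ≤ x^2)]
      rw [Real.rpow_neg hx0.le]
      congr 1
      rw [← Real.rpow_natCast x 2]
      norm_num
    rw [hxinv, habs, Complex.real_smul]
    unfold expSum
    rw [Finset.mul_sum]
    have hT : ∀ j ≤ j0, (∑' n : ℕ, b j n * ((Real.exp (-(2 * Real.pi * (n:ℝ) * x / N)) : ℝ) : ℂ))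
        = (if j = 0 then b 0 0 else 0)
          + ∑' n : ℕ, b j (n+1) * ((Real.exp (-(2 * Real.pi * ((n+1:ℕ):ℝ) * x / N)) : ℝ) : ℂ) := by
      intro j hj
      rw [Summable.tsum_eq_zero_add (aux_summable_pt N hN (hb j) hx0)]
      congr 1
      by_cases h : j = 0
      · subst h
        simp only [if_pos rfl, Nat.cast_zero]
        norm_num
      · rw [if_neg h, hb0 j (Nat.one_le_iff_ne_zero.mpr h) hj, zero_mul]
    have hsummand : ∀ j ∈ Finset.range (j0+1),
        ((x ^ ((-2):ℝ) : ℝ) : ℂ) * ((x:ℂ)^j * ∑' n : ℕ, b j n *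
            ((Real.exp (-(2 * Real.pi * (n:ℝ) * x / N)) : ℝ) : ℂ))
          = (if j = 0 then b 0 0 * ((x ^ ((0:ℝ)-2) : ℝ) : ℂ) else 0)
            + ∑' n : ℕ, b' j (n+1) *
              ((x ^ (((j:ℕ):ℝ) - 2) * Real.exp (-(2 * Real.pi * ((n:ℝ)+1) / N * x)) : ℝ) : ℂ) := by
      intro j hj
      have hj' : j ≤ j0 := Nat.lt_succ_iff.mp (Finset.mem_range.mp hj)
      rw [hT j hj', mul_add, mul_add]
      congr 1
      · split_ifs with h
        · subst h
          rw [pow_zero, show ((0:ℝ)-2) = ((-2):ℝ) by norm_num]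
          ring
        · rw [mul_zero, mul_zero]
      · have hcoe : ((x ^ ((-2):ℝ) : ℝ) : ℂ) * (x:ℂ)^j = ((x ^ (((j:ℕ):ℝ) - 2) : ℝ) : ℂ) := by
          rw [show ((j:ℕ):ℝ) - 2 = (-2) + ((j:ℕ):ℝ) by ring, Real.rpow_add hx0,
            Real.rpow_natCast]
          push_cast
          ring
        rw [← mul_assoc, hcoe, ← tsum_mul_left]
        refine tsum_congr fun n => ?_
        rw [hb'succ]
        push_cast
        ring_nf
    rw [Finset.sum_congr rfl hsummand, Finset.sum_add_distrib,
      Finset.sum_ite_eq' (Finset.range (j0+1)) 0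
        (fun _ => b 0 0 * ((x ^ ((0:ℝ)-2) : ℝ) : ℂ))]
    simp
  -- the extra `b 0 0`-term on (1,∞)
  have hb00int : IntegrableOn (fun x : ℝ => b 0 0 * ((x ^ ((0:ℝ)-2) : ℝ) : ℂ)) (Set.Ioi 1) :=
    (((integrableOn_Ioi_rpow_of_lt (by norm_num : ((0:ℝ)-2) < -1) zero_lt_one)).ofReal
      (𝕜 := ℂ)).const_mul _
  have hb00val : ∫ x in Set.Ioi 1, b 0 0 * ((x ^ ((0:ℝ)-2) : ℝ) : ℂ) = b 0 0 := by
    rw [MeasureTheory.integral_const_mul, my_integral_ofReal,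
      integral_Ioi_rpow_of_lt (by norm_num : ((0:ℝ)-2) < -1) zero_lt_one]
    norm_num
  have haeB : (fun x : ℝ => b 0 0 * ((x ^ ((0:ℝ)-2) : ℝ) : ℂ)
      + ∑ j ∈ Finset.range (j0+1), ∑' n : ℕ, b' j (n+1) *
        ((x ^ (((j:ℕ):ℝ) - 2) * Real.exp (-(2 * Real.pi * ((n:ℝ)+1) / N * x)) : ℝ) : ℂ))
      =ᵐ[volume.restrict (Set.Ioi 1)] (fun x : ℝ => |(-(x^2)⁻¹)| • φ x⁻¹) := by
    filter_upwards [ae_restrict_mem measurableSet_Ioi] with x hx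
    exact (hb_cong x hx).symm
  have hBint : IntegrableOn (fun x : ℝ => |(-(x^2)⁻¹)| • φ x⁻¹) (Set.Ioi 1) :=
    (hb00int.add (integrable_finset_sum _ (fun j _ => (hblockB j).1))).congr haeB
  have hIocInt : IntegrableOn φ (Set.Ioc (0:ℝ) 1) := by
    rw [integrableOn_Ioc_iff_integrableOn_Ioo, hintiff]
    exact hBint
  have hIocVal : ∫ x in Set.Ioc (0:ℝ) 1, φ x
      = b 0 0 + ∑ j ∈ Finset.range (j0+1), ∑' n : ℕ, b' j (n+1) *
        (((∫ y in Set.Ioi 1, y ^ (((j:ℕ):ℝ) - 2) *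
          Real.exp (-(2 * Real.pi * ((n:ℝ)+1) / N * y))) : ℝ) : ℂ) := by
    rw [integral_Ioc_eq_integral_Ioo, hchg, ← integral_congr_ae haeB,
      integral_add hb00int (integrable_finset_sum _ (fun j _ => (hblockB j).1)), hb00val,
      integral_finset_sum _ (fun j _ => (hblockB j).1)]
    congr 1
    exact Finset.sum_congr rfl fun j _ => (hblockB j).2
  -- splitting the integral
  have hsplit : ∫ y in Set.Ioi (0:ℝ), φ y
      = (∫ y in Set.Ioc (0:ℝ) 1, φ y) + ∫ y in Set.Ioi (1:ℝ), φ y := by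
    rw [← Set.Ioc_union_Ioi_eq_Ioi (zero_le_one (α := ℝ))]
    exact setIntegral_union (Set.Ioc_disjoint_Ioi le_rfl) measurableSet_Ioi hIocInt hφInt1
  -- rewriting the terms via incomplete gamma values
  have hcast_a : ∀ j n : ℕ, (((2 * Real.pi * ((n:ℝ)+1) / N) ^ (-(((j:ℕ):ℝ)+1)) : ℝ) : ℂ)
      = ((N : ℂ) / (2 * (Real.pi:ℂ) * ((n:ℂ)+1))) ^ (j+1) := by
    intro j n
    have hc0 : (0:ℝ) ≤ 2 * Real.pi * ((n:ℝ)+1) / N := by positivity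
    have h1 : (2 * Real.pi * ((n:ℝ)+1) / N) ^ (-(((j:ℕ):ℝ)+1))
        = ((2 * Real.pi * ((n:ℝ)+1) / N) ^ (j+1 : ℕ))⁻¹ := by
      rw [Real.rpow_neg hc0]
      congr 1
      rw [← Real.rpow_natCast (2 * Real.pi * ((n:ℝ)+1) / N) (j+1)]
      norm_num
    rw [h1, ← inv_pow]
    push_cast
    rw [inv_div]
  have hcast_b : ∀ j n : ℕ, (((2 * Real.pi * ((n:ℝ)+1) / N) ^ (-((((j:ℕ):ℝ)-2)+1)) : ℝ) : ℂ)
      = ((N : ℂ) / (2 * (Real.pi:ℂ) * ((n:ℂ)+1))) ^ ((j:ℤ) - 1) := by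
    intro j n
    have h1 : (2 * Real.pi * ((n:ℝ)+1) / N) ^ (-((((j:ℕ):ℝ)-2)+1))
        = (2 * Real.pi * ((n:ℝ)+1) / N) ^ ((1 - (j:ℤ) : ℤ) : ℝ) := by
      congr 1
      push_cast
      ring
    rw [h1, Real.rpow_intCast, Complex.ofReal_zpow,
      show ((1:ℤ) - j) = -((j:ℤ)-1) by ring, zpow_neg, ← inv_zpow]
    congr 1
    push_cast
    rw [inv_div]
  have hAterm : ∀ j n : ℕ, a j (n+1) *
      (((∫ y in Set.Ioi 1, y ^ ((j:ℕ):ℝ) *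
        Real.exp (-(2 * Real.pi * ((n:ℝ)+1) / N * y))) : ℝ) : ℂ)
      = a j (n + 1) * ((N : ℂ) / (2 * (Real.pi : ℂ) * ((n : ℂ) + 1))) ^ (j + 1)
          * (incGamma ((j : ℝ) + 1) (2 * Real.pi * ((n : ℝ) + 1) / N) : ℂ) := by
    intro j n
    have hc : (0:ℝ) < 2 * Real.pi * ((n:ℝ)+1) / N := by positivity
    rw [aux_val ((j:ℕ):ℝ) hc, Complex.ofReal_mul, hcast_a j n]
    ring
  have hBterm : ∀ j n : ℕ, b' j (n+1) *
      (((∫ y in Set.Ioi 1, y ^ (((j:ℕ):ℝ) - 2) *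
        Real.exp (-(2 * Real.pi * ((n:ℝ)+1) / N * y))) : ℝ) : ℂ)
      = b j (n + 1) * ((N : ℂ) / (2 * (Real.pi : ℂ) * ((n : ℂ) + 1))) ^ ((j:ℤ) - 1)
          * (incGamma ((j : ℝ) - 1) (2 * Real.pi * ((n : ℝ) + 1) / N) : ℂ) := by
    intro j n
    have hc : (0:ℝ) < 2 * Real.pi * ((n:ℝ)+1) / N := by positivity
    rw [hb'succ, aux_val (((j:ℕ):ℝ) - 2) hc, Complex.ofReal_mul, hcast_b j n,
      show (((j:ℕ):ℝ)-2)+1 = ((j:ℕ):ℝ)-1 by ring]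
    ring
  have hsumA : ∀ j ∈ Finset.range (jI+1), Summable fun n : ℕ =>
      a j (n + 1) * ((N : ℂ) / (2 * (Real.pi : ℂ) * ((n : ℂ) + 1))) ^ (j + 1)
        * (incGamma ((j : ℝ) + 1) (2 * Real.pi * ((n : ℝ) + 1) / N) : ℂ) := by
    intro j _
    exact (aux_summable_cval N hN (a j) (ha j) ((j:ℕ):ℝ)).congr (fun n => hAterm j n)
  have hsumB : ∀ j ∈ Finset.range (j0+1), Summable fun n : ℕ =>
      b j (n + 1) * ((N : ℂ) / (2 * (Real.pi : ℂ) * ((n : ℂ) + 1))) ^ ((j:ℤ) - 1)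
        * (incGamma ((j : ℝ) - 1) (2 * Real.pi * ((n : ℝ) + 1) / N) : ℂ) := by
    intro j _
    exact (aux_summable_cval N hN (b' j) (hb'poly j) (((j:ℕ):ℝ) - 2)).congr (fun n => hBterm j n)
  rw [hsplit, hInt1val, hIocVal, Summable.tsum_finsetSum hsumA, Summable.tsum_finsetSum hsumB,
    Finset.sum_congr rfl (fun j _ => tsum_congr (hAterm j)),
    Finset.sum_congr rfl (fun j _ => tsum_congr (hBterm j))]
  ring
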